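/- Let A be an n×n max-plus matrix, C a column-regular m×n matrix, b a vector, d a regular vector, and suppose Δ = Tr(A) ⊕ d⁻ ⊗ C ⊗ A* ⊗ b ≤ 0. Then the set of regular solutions of the system {A ⊗ x ⊕ b ≤ x, C ⊗ x ≤ d} is exactly { A* ⊗ u : u regular, b ≤ u ≤ (d⁻ ⊗ C ⊗ A*)⁻ }. -/

import Mathlib

noncomputable section

/-- Max-plus carrier: ℝ ∪ {-∞}. Addition ⊕ is `max`, multiplication ⊗ is `+`
(with ⊥ = -∞ absorbing), zero is ⊥ and unit is `(0 : ℝ)`. -/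
abbrev MP := WithBot ℝ

/-- Multiplicative conjugate: negate a finite value, send -∞ to -∞. -/
def mpInv (a : MP) : MP := a.map (fun t => -t)

/-- Max-plus matrix product. -/
def mpMulM {l m n : ℕ} (A : Fin l → Fin m → MP) (B : Fin m → Fin n → MP) :
    Fin l → Fin n → MP := fun i j => Finset.univ.sup fun k => A i k + B k j

/-- Max-plus matrix-vector product. -/
def mpMulV {m n : ℕ} (A : Fin m → Fin n → MP) (x : Fin n → MP) : Fin m → MP :=
  fun i => Finset.univ.sup fun j => A i j + x j

/-- Max-plus identity matrix. -/
def mpId {n : ℕ} : Fin n → Fin n → MP := fun i j => if i = j then ((0:ℝ) : MP) else ⊥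

/-- Max-plus matrix power. -/
def mpPow {n : ℕ} (A : Fin n → Fin n → MP) : ℕ → (Fin n → Fin n → MP)
  | 0 => mpId
  | k+1 => mpMulM (mpPow A k) A

/-- Max-plus trace. -/
def mpTr {n : ℕ} (A : Fin n → Fin n → MP) : MP := Finset.univ.sup fun i => A i i

/-- Tr(A) = tr A ⊕ tr A² ⊕ ⋯ ⊕ tr Aⁿ. -/
def mpTR {n : ℕ} (A : Fin n → Fin n → MP) : MP :=
  (Finset.Icc 1 n).sup fun m => mpTr (mpPow A m)

/-- Kleene star A* = I ⊕ A ⊕ ⋯ ⊕ A^{n-1}. -/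
def mpStar {n : ℕ} (A : Fin n → Fin n → MP) : Fin n → Fin n → MP :=
  fun i j => (Finset.range n).sup fun k => mpPow A k i j

/-- Max-plus spectral radius λ = max_{1≤m≤n} tr(A^m)^{1/m}. -/
def mpLam {n : ℕ} (A : Fin n → Fin n → MP) : MP :=
  (Finset.Icc 1 n).sup fun m => (mpTr (mpPow A m)).map (fun t => t / (m : ℝ))

/-- The alternating product B^{i₀} A B^{i₁} A ⋯ A B^{iₖ}. -/
def mpChain {n : ℕ} (A B : Fin n → Fin n → MP) : (k : ℕ) → (Fin (k+1) → ℕ) → (Fin n → Fin n → MP)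
  | 0, i => mpPow B (i 0)
  | (k+1), i => mpMulM (mpChain A B k (fun j => i j.castSucc)) (mpMulM A (mpPow B (i (Fin.last (k+1)))))

-- auxiliary lemmas
lemma mp_sup_add {α : Type*} (s : Finset α) (f : α → MP) (c : MP) :
    s.sup f + c = s.sup fun x => f x + c := by
  induction s using Finset.cons_induction with
  | empty => simp
  | cons a s ha ih => simp [Finset.sup_cons, ← ih, (max_add_add_right _ _ _).symm]

lemma mp_add_sup {α : Type*} (s : Finset α) (f : α → MP) (c : MP) :
    c + s.sup f = s.sup fun x => c + f x := by
  rw [add_comm, mp_sup_add]; simp [add_comm]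

lemma mpMulV_mulM {l m n : ℕ} (P : Fin l → Fin m → MP) (Q : Fin m → Fin n → MP)
    (v : Fin n → MP) : mpMulV (mpMulM P Q) v = mpMulV P (mpMulV Q v) := by
  funext i
  unfold mpMulV mpMulM
  simp only [mp_sup_add, mp_add_sup]
  rw [Finset.sup_comm]
  simp [add_assoc]

lemma mpMulM_assoc {l m n o : ℕ} (P : Fin l → Fin m → MP) (Q : Fin m → Fin n → MP)
    (R : Fin n → Fin o → MP) : mpMulM (mpMulM P Q) R = mpMulM P (mpMulM Q R) := by
  funext i j
  unfold mpMulM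
  simp only [mp_sup_add, mp_add_sup]
  rw [Finset.sup_comm]
  simp [add_assoc]

lemma mpMulV_mono_vec {m n : ℕ} (A : Fin m → Fin n → MP) {v w : Fin n → MP}
    (h : ∀ j, v j ≤ w j) (i : Fin m) : mpMulV A v i ≤ mpMulV A w i := by
  unfold mpMulV
  exact Finset.sup_le fun j _ => le_trans (add_le_add_right (h j) _) (Finset.le_sup (f := fun j => A i j + w j) (Finset.mem_univ j))

lemma mpMulV_mono_mat {m n : ℕ} {A B : Fin m → Fin n → MP} (v : Fin n → MP)
    (h : ∀ i j, A i j ≤ B i j) (i : Fin m) : mpMulV A v i ≤ mpMulV B v i := by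
  unfold mpMulV
  exact Finset.sup_le fun j _ => le_trans (add_le_add_left (h i j) _) (Finset.le_sup (f := fun j => B i j + v j) (Finset.mem_univ j))

lemma mpMulV_id {n : ℕ} (v : Fin n → MP) : mpMulV mpId v = v := by
  funext i
  unfold mpMulV mpId
  apply le_antisymm
  · apply Finset.sup_le
    intro j _
    by_cases h : i = j
    · subst h; simp
    · simp [h]
  · refine le_trans ?_ (Finset.le_sup (Finset.mem_univ i))
    simp

lemma mpMulM_id_left {m n : ℕ} (A : Fin m → Fin n → MP) : mpMulM mpId A = A := by
  funext i j
  unfold mpMulM mpId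
  apply le_antisymm
  · apply Finset.sup_le
    intro k _
    by_cases h : i = k
    · subst h; simp
    · simp [h]
  · refine le_trans ?_ (Finset.le_sup (Finset.mem_univ i))
    simp

lemma mpMulM_id_right {m n : ℕ} (A : Fin m → Fin n → MP) : mpMulM A mpId = A := by
  funext i j
  unfold mpMulM mpId
  apply le_antisymm
  · apply Finset.sup_le
    intro k _
    by_cases h : k = j
    · subst h; simp
    · simp [h]
  · refine le_trans ?_ (Finset.le_sup (Finset.mem_univ j))
    simp

lemma mpPow_succ_left {n : ℕ} (A : Fin n → Fin n → MP) (k : ℕ) :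
    mpPow A (k+1) = mpMulM A (mpPow A k) := by
  induction k with
  | zero => show mpMulM (mpPow A 0) A = mpMulM A mpId
            rw [show mpPow A 0 = mpId from rfl, mpMulM_id_left, mpMulM_id_right]
  | succ k ih => show mpMulM (mpPow A (k+1)) A = _
                 rw [ih, mpMulM_assoc,
                   show mpMulM (mpPow A k) A = mpPow A (k+1) from rfl, ih]

/-- weight of the walk p 0, p 1, ..., p N -/
def wlk {n : ℕ} (A : Fin n → Fin n → MP) (p : ℕ → Fin n) (N : ℕ) : MP :=
  (Finset.range N).sum fun t => A (p t) (p (t+1))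

lemma wlk_le_pow {n : ℕ} (A : Fin n → Fin n → MP) (p : ℕ → Fin n) (N : ℕ) :
    wlk A p N ≤ mpPow A N (p 0) (p N) := by
  induction N with
  | zero => simp [wlk, mpPow, mpId]
  | succ N ih =>
    have : wlk A p (N+1) = wlk A p N + A (p N) (p (N+1)) := Finset.sum_range_succ _ _
    rw [this]
    show _ ≤ mpMulM (mpPow A N) A (p 0) (p (N+1))
    refine le_trans (add_le_add_left ih _) ?_
    unfold mpMulM
    exact Finset.le_sup (f := fun k => mpPow A N (p 0) k + A k (p (N+1))) (Finset.mem_univ (p N))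

lemma mp_add_coe_le_iff (x c : MP) (r : ℝ) : x + (r:MP) ≤ c ↔ x ≤ c.map (· - r) := by
  induction x using WithBot.recBotCoe with
  | bot => simp
  | coe s =>
    induction c using WithBot.recBotCoe with
    | bot => simp [← WithBot.coe_add]
    | coe t =>
      rw [← WithBot.coe_add]
      show ((s+r : ℝ) : MP) ≤ (t : MP) ↔ (s : MP) ≤ ((t - r : ℝ) : MP)
      rw [WithBot.coe_le_coe, WithBot.coe_le_coe]
      constructor <;> intro h <;> linarith

lemma pow_le_of_walks {n : ℕ} (A : Fin n → Fin n → MP) (N : ℕ) :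
    ∀ (j : Fin n) (c : MP) (i : Fin n),
      (∀ p : ℕ → Fin n, p 0 = i → p N = j → wlk A p N ≤ c) → mpPow A N i j ≤ c := by
  induction N with
  | zero =>
    intro j c i h
    show mpId i j ≤ c
    unfold mpId
    by_cases hij : i = j
    · subst hij
      simp only [if_pos rfl]
      have := h (fun _ => i) rfl rfl
      simpa [wlk] using this
    · simp [hij]
  | succ N ih =>
    intro j c i h
    show mpMulM (mpPow A N) A i j ≤ c
    unfold mpMulM
    apply Finset.sup_le
    intro l _
    rcases hAlj : A l j with _ | r
    · show mpPow A N i l + ⊥ ≤ c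
      simp
    · show mpPow A N i l + (r : MP) ≤ c
      rw [mp_add_coe_le_iff]
      apply ih l _ i
      intro p hp0 hpN
      rw [← mp_add_coe_le_iff]
      set q : ℕ → Fin n := fun t => if t ≤ N then p t else j with hq
      have hqw : wlk A q (N+1) = wlk A p N + (A l j) := by
        rw [wlk, Finset.sum_range_succ]
        congr 1
        · apply Finset.sum_congr rfl
          intro t ht
          have ht' : t < N := Finset.mem_range.mp ht
          simp only [hq, if_pos (le_of_lt ht'), if_pos ht'.le]
          rw [if_pos (by omega : t + 1 ≤ N)]
        · simp only [hq, if_pos (le_refl N), if_neg (by omega : ¬ N + 1 ≤ N), hpN]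
      have := h q (by simp [hq, hp0]) (by simp [hq])
      rw [hqw, hAlj] at this
      exact this

lemma wlk_le_star {n : ℕ} (A : Fin n → Fin n → MP)
    (hTr : ∀ l, 1 ≤ l → l ≤ n → mpTr (mpPow A l) ≤ ((0:ℝ) : MP)) :
    ∀ N (p : ℕ → Fin n), wlk A p N ≤ mpStar A (p 0) (p N) := by
  intro N
  induction N using Nat.strong_induction_on with
  | _ N IH =>
  intro p
  by_cases hN : N < n
  · refine le_trans (wlk_le_pow A p N) ?_
    exact Finset.le_sup (f := fun k => mpPow A k (p 0) (p N)) (Finset.mem_range.mpr hN)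
  · push_neg at hN
    have hn0 : 0 < n := Fin.pos (p 0)
    -- pigeonhole on p 0, ..., p n
    obtain ⟨a', b', hab', heq'⟩ := Fintype.exists_ne_map_eq_of_card_lt
      (fun t : Fin (n+1) => p t.val) (by simp)
    -- normalize to a < b as naturals
    obtain ⟨a, b, hab, hbn, hpab⟩ :
        ∃ a b : ℕ, a < b ∧ b ≤ n ∧ p a = p b := by
      rcases lt_or_gt_of_ne hab' with h | h
      · exact ⟨a', b', h, Nat.lt_succ_iff.mp b'.isLt, heq'⟩
      · exact ⟨b', a', h, Nat.lt_succ_iff.mp a'.isLt, heq'.symm⟩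
    set L := b - a with hL
    have hL1 : 1 ≤ L := by omega
    have haL : a + L = b := by omega
    set M := N - L with hM
    have hMN : M < N := by omega
    have haM : a ≤ M := by omega
    have hMLN : M + L = N := by omega
    set q : ℕ → Fin n := fun t => if t ≤ a then p t else p (t + L) with hq
    have hq_low : ∀ t, t ≤ a → q t = p t := fun t ht => if_pos ht
    have hq_high : ∀ t, a ≤ t → q t = p (t + L) := by
      intro t ht
      rcases eq_or_lt_of_le ht with h | h
      · subst h
        show (if a ≤ a then p a else p (a + L)) = p (a + L)
        rw [if_pos le_rfl, haL]
        exact hpab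
      · exact if_neg (by omega)
    set f : ℕ → MP := fun t => A (p t) (p (t+1)) with hf
    have S1 : wlk A p N = ((Finset.Ico 0 a).sum f + (Finset.Ico a b).sum f)
        + (Finset.Ico b N).sum f := by
      rw [wlk, Finset.range_eq_Ico,
        ← Finset.sum_Ico_consecutive f (by omega : 0 ≤ b) (by omega : b ≤ N),
        ← Finset.sum_Ico_consecutive f (by omega : 0 ≤ a) (by omega : a ≤ b)]
    have S2 : wlk A q M = (Finset.Ico 0 a).sum f + (Finset.Ico b N).sum f := by
      rw [wlk, Finset.range_eq_Ico,
        ← Finset.sum_Ico_consecutive (fun t => A (q t) (q (t+1))) (by omega : 0 ≤ a) haM]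
      congr 1
      · apply Finset.sum_congr rfl
        intro t ht
        have ht' : t < a := (Finset.mem_Ico.mp ht).2
        rw [hq_low t (by omega), hq_low (t+1) (by omega)]
      · have e1 : ∀ t ∈ Finset.Ico a M, A (q t) (q (t+1)) = f (t + L) := by
          intro t ht
          have ht' := Finset.mem_Ico.mp ht
          rw [hq_high t ht'.1, hq_high (t+1) (by omega),
            show t + 1 + L = t + L + 1 from by omega]
        rw [Finset.sum_congr rfl e1, Finset.sum_Ico_eq_sum_range,
          Finset.sum_Ico_eq_sum_range]
        have : M - a = N - b := by omega
        rw [this]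
        apply Finset.sum_congr rfl
        intro t _
        rw [show a + t + L = b + t from by omega]
    have Scyc : (Finset.Ico a b).sum f ≤ ((0:ℝ) : MP) := by
      have e : (Finset.Ico a b).sum f = wlk A (fun t => p (a + t)) L := by
        rw [wlk, Finset.sum_Ico_eq_sum_range, hL]
        rw [← hL]; rfl
      rw [e]
      refine le_trans (wlk_le_pow A _ L) ?_
      have hend : p (a + L) = p a := by rw [haL]; exact hpab.symm
      simp only [hend]
      refine le_trans ?_ (hTr L hL1 (by omega))
      unfold mpTr
      exact Finset.le_sup (f := fun i => mpPow A L i i) (Finset.mem_univ (p a))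
    have key : wlk A p N ≤ wlk A q M := by
      rw [S1, S2]
      calc (Finset.Ico 0 a).sum f + (Finset.Ico a b).sum f + (Finset.Ico b N).sum f
          ≤ (Finset.Ico 0 a).sum f + ((0:ℝ):MP) + (Finset.Ico b N).sum f := by
            exact add_le_add_left (add_le_add_right Scyc _) _
        _ = (Finset.Ico 0 a).sum f + (Finset.Ico b N).sum f := by
            rw [show ((0:ℝ):MP) = (0 : MP) from rfl, add_zero]
    refine le_trans key (le_trans (IH M hMN q) ?_)
    rw [hq_low 0 (by omega), hq_high M haM, hMLN]

lemma mpPow_le_star {n : ℕ} (A : Fin n → Fin n → MP)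
    (hTr : ∀ l, 1 ≤ l → l ≤ n → mpTr (mpPow A l) ≤ ((0:ℝ) : MP)) (N : ℕ) (i j : Fin n) :
    mpPow A N i j ≤ mpStar A i j := by
  apply pow_le_of_walks A N j _ i
  intro p hp0 hpN
  have := wlk_le_star A hTr N p
  rwa [hp0, hpN] at this

lemma mpStar_diag {n : ℕ} (A : Fin n → Fin n → MP) (i : Fin n) :
    ((0:ℝ) : MP) ≤ mpStar A i i := by
  refine le_trans ?_ (Finset.le_sup (f := fun k => mpPow A k i i)
    (Finset.mem_range.mpr (Fin.pos i)))
  simp [mpPow, mpId]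

lemma mpMulV_star_ge {n : ℕ} (A : Fin n → Fin n → MP) (v : Fin n → MP) (i : Fin n) :
    v i ≤ mpMulV (mpStar A) v i := by
  calc v i = 0 + v i := (zero_add _).symm
    _ ≤ mpStar A i i + v i := add_le_add_left (mpStar_diag A i) _
    _ ≤ _ := Finset.le_sup (f := fun j => mpStar A i j + v j) (Finset.mem_univ i)

lemma mpMulV_star_decomp {n : ℕ} (A : Fin n → Fin n → MP) (v : Fin n → MP) (i : Fin n) :
    mpMulV (mpStar A) v i = (Finset.range n).sup fun k => mpMulV (mpPow A k) v i := by
  unfold mpMulV mpStar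
  simp only [mp_sup_add]
  exact Finset.sup_comm _ _ _

lemma mpPow_fix {n : ℕ} (A : Fin n → Fin n → MP) (x : Fin n → MP)
    (hAx : ∀ i, mpMulV A x i ≤ x i) : ∀ k i, mpMulV (mpPow A k) x i ≤ x i := by
  intro k
  induction k with
  | zero => intro i; rw [show mpPow A 0 = mpId from rfl, mpMulV_id]
  | succ k ih =>
    intro i
    have : mpMulV (mpPow A (k+1)) x = mpMulV (mpPow A k) (mpMulV A x) := by
      rw [show mpPow A (k+1) = mpMulM (mpPow A k) A from rfl, mpMulV_mulM]
    rw [this]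
    exact le_trans (mpMulV_mono_vec _ hAx i) (ih i)

lemma mpStar_fix {n : ℕ} (A : Fin n → Fin n → MP) (x : Fin n → MP)
    (hAx : ∀ i, mpMulV A x i ≤ x i) (i : Fin n) : mpMulV (mpStar A) x i = x i := by
  refine le_antisymm ?_ (mpMulV_star_ge A x i)
  rw [mpMulV_star_decomp]
  exact Finset.sup_le fun k _ => mpPow_fix A x hAx k i

lemma mpMulM_star_le {n : ℕ} (A : Fin n → Fin n → MP)
    (hTr : ∀ l, 1 ≤ l → l ≤ n → mpTr (mpPow A l) ≤ ((0:ℝ) : MP)) (i j : Fin n) :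
    mpMulM A (mpStar A) i j ≤ mpStar A i j := by
  unfold mpMulM mpStar
  apply Finset.sup_le
  intro k _
  rw [mp_add_sup]
  apply Finset.sup_le
  intro c _
  have h1 : A i k + mpPow A c k j ≤ mpMulM A (mpPow A c) i j :=
    Finset.le_sup (f := fun k => A i k + mpPow A c k j) (Finset.mem_univ k)
  refine le_trans h1 ?_
  rw [← mpPow_succ_left]
  exact mpPow_le_star A hTr (c+1) i j

lemma mpInv_coe (r : ℝ) : mpInv ((r : ℝ) : MP) = ((-r : ℝ) : MP) := rfl

/-- If Δ = Tr(A) ⊕ d⁻ C A* b ≤ 𝟙, the regular solutions of the system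
A ⊗ x ⊕ b ≤ x, C ⊗ x ≤ d are exactly x = A* ⊗ u with b ≤ u ≤ (d⁻ C A*)⁻. -/
theorem maxplus_system_solutions {m n : ℕ} (A : Fin n → Fin n → MP)
    (C : Fin m → Fin n → MP) (hC : ∀ j, ∃ i, C i j ≠ ⊥)
    (b : Fin n → MP) (d : Fin m → ℝ)
    (hΔ : max (mpTR A)
        (Finset.univ.sup fun j =>
          (Finset.univ.sup fun i => ((-(d i) : ℝ) : MP) + mpMulM C (mpStar A) i j) + b j)
      ≤ ((0:ℝ) : MP))
    (x : Fin n → MP) :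
    ((∀ i, x i ≠ ⊥) ∧ (∀ i, max (mpMulV A x i) (b i) ≤ x i) ∧
      (∀ i, mpMulV C x i ≤ (d i : MP))) ↔
    (∃ u : Fin n → ℝ,
      (∀ j, b j ≤ (u j : MP)) ∧
      (∀ j, (u j : MP) ≤
        mpInv (Finset.univ.sup fun i => ((-(d i) : ℝ) : MP) + mpMulM C (mpStar A) i j)) ∧
      ∀ i, x i = mpMulV (mpStar A) (fun j => (u j : MP)) i) := by
  have hTr : ∀ l, 1 ≤ l → l ≤ n → mpTr (mpPow A l) ≤ ((0:ℝ) : MP) := by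
    intro l h1 h2
    have h := le_trans (le_max_left _ _) hΔ
    exact le_trans (Finset.le_sup (f := fun m => mpTr (mpPow A m))
      (Finset.mem_Icc.mpr ⟨h1, h2⟩)) h
  set S : Fin n → MP := fun j =>
    Finset.univ.sup fun i => ((-(d i) : ℝ) : MP) + mpMulM C (mpStar A) i j with hS
  have hCA_diag : ∀ i j, C i j ≤ mpMulM C (mpStar A) i j := by
    intro i j
    refine le_trans ?_ (Finset.le_sup (f := fun k => C i k + mpStar A k j) (Finset.mem_univ j))
    calc C i j = C i j + 0 := (add_zero _).symm
      _ ≤ C i j + mpStar A j j := add_le_add_right (mpStar_diag A j) _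
  have hSne : ∀ j, S j ≠ ⊥ := by
    intro j hbot
    obtain ⟨i, hCij⟩ := hC j
    have h1 : ((-(d i) : ℝ) : MP) + C i j ≤ S j :=
      le_trans (add_le_add_right (hCA_diag i j) _)
        (Finset.le_sup (f := fun i => ((-(d i) : ℝ) : MP) + mpMulM C (mpStar A) i j)
          (Finset.mem_univ i))
    rw [hbot, le_bot_iff, WithBot.add_eq_bot] at h1
    rcases h1 with h | h
    · exact WithBot.coe_ne_bot h
    · exact hCij h
  constructor
  · rintro ⟨hreg, hsol, hCx⟩
    have hAx : ∀ i, mpMulV A x i ≤ x i := fun i => le_trans (le_max_left _ _) (hsol i)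
    have hbx : ∀ i, b i ≤ x i := fun i => le_trans (le_max_right _ _) (hsol i)
    have hstar : mpMulV (mpStar A) x = x := funext (mpStar_fix A x hAx)
    refine ⟨fun j => (x j).unbot (hreg j), ?_, ?_, ?_⟩
    · intro j
      rw [WithBot.coe_unbot]
      exact hbx j
    · intro j
      rw [WithBot.coe_unbot]
      show x j ≤ mpInv (S j)
      rcases hSj : S j with _ | s
      · exact absurd hSj (hSne j)
      · -- S j + x j ≤ 0
        have hCAx : ∀ i, mpMulV (mpMulM C (mpStar A)) x i ≤ (d i : MP) := by
          intro i
          rw [mpMulV_mulM, hstar]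
          exact hCx i
        have key : S j + x j ≤ ((0:ℝ) : MP) := by
          rw [hS, mp_sup_add]
          apply Finset.sup_le
          intro i _
          have h1 : mpMulM C (mpStar A) i j + x j ≤ (d i : MP) :=
            le_trans (Finset.le_sup (f := fun j => mpMulM C (mpStar A) i j + x j)
              (Finset.mem_univ j)) (hCAx i)
          calc ((-(d i) : ℝ) : MP) + mpMulM C (mpStar A) i j + x j
              = ((-(d i) : ℝ) : MP) + (mpMulM C (mpStar A) i j + x j) := add_assoc _ _ _
            _ ≤ ((-(d i) : ℝ) : MP) + (d i : MP) := add_le_add_right h1 _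
            _ = ((0:ℝ) : MP) := by rw [← WithBot.coe_add]; norm_num
        rw [hSj] at key
        show x j ≤ ((-s : ℝ) : MP)
        have key' : x j + ((s : ℝ) : MP) ≤ ((0:ℝ) : MP) := by
          rw [add_comm]; exact key
        rw [mp_add_coe_le_iff] at key'
        rwa [show (((0:ℝ) : MP)).map (fun t => t - s) = ((-s : ℝ) : MP) by
          rw [WithBot.map_coe]; norm_num] at key'
    · intro i
      have : (fun j => ((x j).unbot (hreg j) : MP)) = x := funext fun j => WithBot.coe_unbot _ _
      rw [this, hstar]
  · rintro ⟨u, hbu, huS, hxu⟩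
    set u' : Fin n → MP := fun j => ((u j : ℝ) : MP) with hu'
    have hxv : x = mpMulV (mpStar A) u' := funext hxu
    have hxge : ∀ i, (u i : MP) ≤ x i := by
      intro i
      rw [hxv]
      exact mpMulV_star_ge A u' i
    refine ⟨?_, ?_, ?_⟩
    · intro i hbot
      have := hxge i
      rw [hbot, le_bot_iff] at this
      exact WithBot.coe_ne_bot this
    · intro i
      rw [max_le_iff]
      constructor
      · rw [hxv, ← mpMulV_mulM]
        exact mpMulV_mono_mat u' (mpMulM_star_le A hTr) i
      · exact le_trans (hbu i) (hxge i)
    · intro i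
      rw [hxv, ← mpMulV_mulM]
      unfold mpMulV
      apply Finset.sup_le
      intro j _
      rcases hSj : S j with _ | s
      · exact absurd hSj (hSne j)
      have hus : (u j : MP) ≤ ((-s : ℝ) : MP) := by
        have h0 : (u j : MP) ≤ mpInv (S j) := huS j
        rw [hSj] at h0
        exact h0
      have h2 : ((-(d i) : ℝ) : MP) + mpMulM C (mpStar A) i j ≤ ((s : ℝ) : MP) := by
        refine le_trans (Finset.le_sup
          (f := fun i => ((-(d i) : ℝ) : MP) + mpMulM C (mpStar A) i j)
          (Finset.mem_univ i)) ?_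
        show S j ≤ _
        exact le_of_eq hSj
      have h3 : mpMulM C (mpStar A) i j ≤ ((d i + s : ℝ) : MP) := by
        calc mpMulM C (mpStar A) i j
            = ((d i : ℝ) : MP) + (((-(d i) : ℝ) : MP) + mpMulM C (mpStar A) i j) := by
              rw [← add_assoc, ← WithBot.coe_add]
              norm_num
          _ ≤ ((d i : ℝ) : MP) + ((s : ℝ) : MP) := add_le_add_right h2 _
          _ = ((d i + s : ℝ) : MP) := by rw [← WithBot.coe_add]
      calc mpMulM C (mpStar A) i j + u' j
          ≤ ((d i + s : ℝ) : MP) + ((-s : ℝ) : MP) := add_le_add h3 hus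
        _ = ((d i : ℝ) : MP) := by rw [← WithBot.coe_add]; norm_num
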